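/- Suppose x* ∈ ℝⁿ, I = supp(Ψᵀx*), and there exist y ∈ ∂‖·‖₁(Ψᵀx*) and β ∈ ℝ^m with Ψy = Φᵀβ. Then for every δ > 0 and b with ‖Φx* − b‖₂ ≤ δ, every minimizer x_δ of ‖Ψᵀx‖₁ subject to ‖Φx − b‖₂ ≤ δ satisfies the Bregman-distance bound d_y(x_δ, x*) := ‖Ψᵀx_δ‖₁ − ‖Ψᵀx*‖₁ − ⟨Ψy, x_δ − x*⟩ ≤ 2δ‖β‖₂. -/

import Mathlib

open Matrix

/-- ℓ₁ norm of a finite real vector. -/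
noncomputable def l1 {k : ℕ} (v : Fin k → ℝ) : ℝ := ∑ i, |v i|

/-- ℓ₂ (Euclidean) norm of a finite real vector. -/
noncomputable def l2 {k : ℕ} (v : Fin k → ℝ) : ℝ := Real.sqrt (∑ i, (v i) ^ 2)

/-- ℓ₁ norm of the subvector indexed by `S`. -/
noncomputable def l1S {k : ℕ} (S : Finset (Fin k)) (v : Fin k → ℝ) : ℝ := ∑ i ∈ S, |v i|

/-- ℓ₂ norm of the subvector indexed by `S`. -/
noncomputable def l2S {k : ℕ} (S : Finset (Fin k)) (v : Fin k → ℝ) : ℝ :=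
  Real.sqrt (∑ i ∈ S, (v i) ^ 2)

/-- ℓ∞ norm of the subvector indexed by `S` (0 if `S` is empty). -/
noncomputable def linfS {k : ℕ} (S : Finset (Fin k)) (v : Fin k → ℝ) : ℝ := ⨆ i ∈ S, |v i|


lemma l2_eq_norm {k : ℕ} (v : Fin k → ℝ) :
    l2 v = ‖(WithLp.equiv 2 (Fin k → ℝ)).symm v‖ := by
  rw [EuclideanSpace.norm_eq]
  simp [l2, Real.norm_eq_abs, sq_abs]

lemma l2_cauchy {k : ℕ} (v w : Fin k → ℝ) :
    |∑ i, v i * w i| ≤ l2 v * l2 w := by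
  have h := abs_real_inner_le_norm ((WithLp.equiv 2 (Fin k → ℝ)).symm v)
    ((WithLp.equiv 2 (Fin k → ℝ)).symm w)
  rw [l2_eq_norm, l2_eq_norm]
  simpa [PiLp.inner_apply, RCLike.inner_apply, mul_comm] using h

lemma l2_sub_le {k : ℕ} (a c : Fin k → ℝ) : l2 (a - c) ≤ l2 a + l2 c := by
  rw [l2_eq_norm, l2_eq_norm, l2_eq_norm]
  exact norm_sub_le _ _

/-- Bregman distance bound for the constrained problem. -/
theorem stmt7 {m n l : ℕ} (Φ : Matrix (Fin m) (Fin n) ℝ) (Ψ : Matrix (Fin n) (Fin l) ℝ)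
    (xs : Fin n → ℝ)
    (y : Fin l → ℝ)
    (hy : ∀ i, (Ψ.transpose.mulVec xs i ≠ 0 → y i = Real.sign (Ψ.transpose.mulVec xs i))
      ∧ |y i| ≤ 1)
    (β : Fin m → ℝ) (hβ : Ψ.mulVec y = Φ.transpose.mulVec β) :
    ∀ δ : ℝ, 0 < δ → ∀ b : Fin m → ℝ, l2 (Φ.mulVec xs - b) ≤ δ →
      ∀ xδ : Fin n → ℝ, l2 (Φ.mulVec xδ - b) ≤ δ →
        (∀ z, l2 (Φ.mulVec z - b) ≤ δ →
          l1 (Ψ.transpose.mulVec xδ) ≤ l1 (Ψ.transpose.mulVec z)) →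
        l1 (Ψ.transpose.mulVec xδ) - l1 (Ψ.transpose.mulVec xs)
            - ∑ j, Ψ.mulVec y j * (xδ j - xs j) ≤ 2 * δ * l2 β := by
  intro δ hδ b hxs xδ hxδ hmin
  have h1 : l1 (Ψ.transpose.mulVec xδ) ≤ l1 (Ψ.transpose.mulVec xs) := hmin xs hxs
  have key : ∑ j, Ψ.mulVec y j * (xδ j - xs j) = ∑ i, β i * Φ.mulVec (xδ - xs) i := by
    rw [hβ]
    have h2 : ∑ j, Φ.transpose.mulVec β j * (xδ j - xs j)
        = Φ.vecMul β ⬝ᵥ (xδ - xs) := by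
      simp [Matrix.mulVec_transpose, dotProduct, Pi.sub_apply, mul_sub, Finset.sum_sub_distrib]
    rw [h2, ← Matrix.dotProduct_mulVec]
    rfl
  have hcs : |∑ i, β i * Φ.mulVec (xδ - xs) i| ≤ l2 β * l2 (Φ.mulVec (xδ - xs)) :=
    l2_cauchy β (Φ.mulVec (xδ - xs))
  have hsub : Φ.mulVec (xδ - xs) = (Φ.mulVec xδ - b) - (Φ.mulVec xs - b) := by
    rw [Matrix.mulVec_sub]; abel
  have htri : l2 (Φ.mulVec (xδ - xs)) ≤ 2 * δ := by
    rw [hsub]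
    calc l2 ((Φ.mulVec xδ - b) - (Φ.mulVec xs - b))
        ≤ l2 (Φ.mulVec xδ - b) + l2 (Φ.mulVec xs - b) := l2_sub_le _ _
      _ ≤ 2 * δ := by linarith
  have hβnn : 0 ≤ l2 β := by rw [l2_eq_norm]; exact norm_nonneg _
  have hfinal : -∑ j, Ψ.mulVec y j * (xδ j - xs j) ≤ 2 * δ * l2 β := by
    rw [key]
    have := neg_abs_le (∑ i, β i * Φ.mulVec (xδ - xs) i)
    have h3 : l2 β * l2 (Φ.mulVec (xδ - xs)) ≤ l2 β * (2 * δ) :=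
      mul_le_mul_of_nonneg_left htri hβnn
    nlinarith [abs_nonneg (∑ i, β i * Φ.mulVec (xδ - xs) i)]
  linarith
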